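/- Let S be a d×d real symmetric positive semidefinite matrix of rank k ≥ 1 and let c ≥ 0. Then tr((I + c·S)^{−1}·S) ≤ tr(S) / (1 + (c/k)·tr(S)). -/

import Mathlib

open Finset in
lemma scalar_bound {d k : ℕ} (hk : 1 ≤ k) (μ : Fin d → ℝ) (hμ : ∀ i, 0 ≤ μ i)
    (hcard : (Finset.univ.filter (fun i => μ i ≠ 0)).card = k) (c : ℝ) (hc : 0 ≤ c) :
    ∑ i, μ i / (1 + c * μ i) ≤ (∑ i, μ i) / (1 + (c / k) * ∑ i, μ i) := by
  rcases eq_or_lt_of_le hc with rfl | hc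
  · simp
  set s : Finset (Fin d) := Finset.univ.filter (fun i => μ i ≠ 0) with hs
  have hT : ∑ i, μ i = ∑ i ∈ s, μ i := by
    rw [← Finset.sum_filter_ne_zero]
  set T : ℝ := ∑ i, μ i with hTdef
  have hT0 : 0 ≤ T := Finset.sum_nonneg fun i _ => hμ i
  have hk0 : (0:ℝ) < k := by exact_mod_cast hk
  -- each a_i := 1 + c * μ i > 0
  have ha : ∀ i, 0 < 1 + c * μ i := fun i => by nlinarith [hμ i]
  -- restrict LHS to s
  have hLHS : ∑ i, μ i / (1 + c * μ i) = ∑ i ∈ s, μ i / (1 + c * μ i) := by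
    rw [← Finset.sum_filter_ne_zero (s := Finset.univ)]
    apply Finset.sum_congr
    · ext i; simp [hs, div_eq_zero_iff, (ha i).ne']
    · intros; rfl
  -- Cauchy–Schwarz: k^2 ≤ (∑ a_i) * (∑ 1/a_i)
  have hcs : (k:ℝ)^2 ≤ (∑ i ∈ s, (1 + c * μ i)) * ∑ i ∈ s, (1 + c * μ i)⁻¹ := by
    have := Finset.sum_mul_sq_le_sq_mul_sq s (fun i => Real.sqrt (1 + c * μ i))
      (fun i => (Real.sqrt (1 + c * μ i))⁻¹)
    have h1 : ∀ i ∈ s, Real.sqrt (1 + c * μ i) * (Real.sqrt (1 + c * μ i))⁻¹ = 1 := by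
      intro i _
      exact mul_inv_cancel₀ (ne_of_gt (Real.sqrt_pos.2 (ha i)))
    rw [Finset.sum_congr rfl h1] at this
    simp only [Finset.sum_const, nsmul_eq_mul, mul_one] at this
    have h2 : ∀ i ∈ s, Real.sqrt (1 + c * μ i) ^ 2 = 1 + c * μ i := fun i _ =>
      Real.sq_sqrt (ha i).le
    have h3 : ∀ i ∈ s, (Real.sqrt (1 + c * μ i))⁻¹ ^ 2 = (1 + c * μ i)⁻¹ := fun i _ => by
      rw [inv_pow, Real.sq_sqrt (ha i).le]
    rw [Finset.sum_congr rfl h2, Finset.sum_congr rfl h3] at this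
    calc (k:ℝ)^2 = ((s.card : ℝ))^2 := by rw [hcard]
    _ ≤ _ := this
  have hsa : ∑ i ∈ s, (1 + c * μ i) = k + c * T := by
    rw [Finset.sum_add_distrib, Finset.sum_const, ← Finset.mul_sum, hcard, ← hT]
    simp
  rw [hsa] at hcs
  have hkcT : (0:ℝ) < k + c * T := by nlinarith
  -- key: ∑ 1/a_i ≥ k^2 / (k + c T)
  have hinv : (k:ℝ)^2 / (k + c * T) ≤ ∑ i ∈ s, (1 + c * μ i)⁻¹ := by
    rw [div_le_iff₀ hkcT]; linarith [mul_comm ((k:ℝ) + c*T) (∑ i ∈ s, (1 + c * μ i)⁻¹), hcs]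
  -- rewrite both sides via 1/c decomposition
  have hterm : ∀ i ∈ s, μ i / (1 + c * μ i) = 1/c - (1/c) * (1 + c * μ i)⁻¹ := by
    intro i _
    have h := (ha i).ne'
    field_simp
    rw [eq_sub_iff_add_eq, ← add_div, add_comm _ 1,
      div_self (by rwa [mul_comm c] at h)]
  rw [hLHS, Finset.sum_congr rfl hterm, Finset.sum_sub_distrib, Finset.sum_const,
    ← Finset.mul_sum, hcard]
  have hden : 0 < 1 + c / k * T := by positivity
  have hkey : (k:ℝ) * (1/c) - (1/c) * ((k:ℝ)^2/(k + c*T)) ≤ T / (1 + c/k*T) := by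
    apply le_of_eq
    field_simp
    ring
  rw [nsmul_eq_mul]
  calc (k:ℝ) * (1/c) - (1/c) * ∑ i ∈ s, (1 + c * μ i)⁻¹
      ≤ (k:ℝ) * (1/c) - (1/c) * ((k:ℝ)^2/(k + c*T)) := by
        have hm : (1/c) * ((k:ℝ)^2/(k + c*T)) ≤ (1/c) * ∑ i ∈ s, (1 + c * μ i)⁻¹ :=
          mul_le_mul_of_nonneg_left hinv (by positivity)
        linarith
    _ ≤ T / (1 + c/k*T) := hkey

open Matrix in
/-- Jensen-type trace bound from the proof of Theorem 7: for `S` positive semidefinite of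
rank `k ≥ 1` and `c ≥ 0`, `tr((I + cS)⁻¹ S) ≤ tr(S)/(1 + (c/k)·tr(S))`. -/
theorem stmt_18 {d k : ℕ} (hk : 1 ≤ k) (S : Matrix (Fin d) (Fin d) ℝ)
    (hS : S.PosSemidef) (hrank : S.rank = k) (c : ℝ) (hc : 0 ≤ c) :
    ((1 + c • S)⁻¹ * S).trace ≤ S.trace / (1 + (c / k) * S.trace) := by
  classical
  have hH := hS.1
  set U : Matrix (Fin d) (Fin d) ℝ := (hH.eigenvectorUnitary : Matrix (Fin d) (Fin d) ℝ) with hUdef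
  set μ := hH.eigenvalues with hμdef
  have hμ0 : ∀ i, 0 ≤ μ i := hS.eigenvalues_nonneg
  have ha : ∀ i, 0 < 1 + c * μ i := fun i => by nlinarith [hμ0 i]
  have hUU : U * star U = 1 := (Matrix.mem_unitaryGroup_iff).mp hH.eigenvectorUnitary.2
  have hU'U : star U * U = 1 := (Matrix.mem_unitaryGroup_iff').mp hH.eigenvectorUnitary.2
  have hspec : S = U * diagonal μ * star U := by
    have := hH.spectral_theorem
    simpa using this
  have htraceConj : ∀ X : Matrix (Fin d) (Fin d) ℝ, (U * X * star U).trace = X.trace := by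
    intro X
    rw [trace_mul_cycle, hU'U, one_mul]
  have htrS : S.trace = ∑ i, μ i := by
    rw [hspec, htraceConj, trace_diagonal]
  -- rank
  have hcard : (Finset.univ.filter (fun i => μ i ≠ 0)).card = k := by
    have h2 := hH.rank_eq_card_non_zero_eigs
    rw [hrank] at h2
    rw [← hμdef] at h2
    rw [h2, Fintype.card_subtype]
  -- 1 + c • S as conjugated diagonal
  have hdiag : (diagonal (fun i => 1 + c * μ i) : Matrix (Fin d) (Fin d) ℝ)
      = 1 + c • diagonal μ := by
    ext i j
    by_cases h : i = j <;> simp [Matrix.diagonal_apply, h, Matrix.one_apply]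
  have hsum : U * diagonal (fun i => 1 + c * μ i) * star U = 1 + c • S := by
    rw [hspec, hdiag, Matrix.mul_add, Matrix.add_mul, Matrix.mul_one, hUU,
      Matrix.mul_smul, Matrix.smul_mul]
  have honemul : (fun i => (1 + c * μ i) * (1 + c * μ i)⁻¹) = fun _ : Fin d => (1:ℝ) :=
    funext fun i => mul_inv_cancel₀ (ha i).ne'
  have hinv : (1 + c • S)⁻¹ = U * diagonal (fun i => (1 + c * μ i)⁻¹) * star U := by
    apply inv_eq_right_inv
    rw [← hsum]
    calc U * diagonal (fun i => 1 + c * μ i) * star U *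
          (U * diagonal (fun i => (1 + c * μ i)⁻¹) * star U)
        = U * (diagonal (fun i => 1 + c * μ i) * (star U * U) *
            diagonal (fun i => (1 + c * μ i)⁻¹)) * star U := by
          simp only [Matrix.mul_assoc]
      _ = U * (diagonal (fun i => 1 + c * μ i) * diagonal (fun i => (1 + c * μ i)⁻¹)) * star U := by
          rw [hU'U, Matrix.mul_one]
      _ = 1 := by
          rw [diagonal_mul_diagonal]
          simp only [honemul, diagonal_one, Matrix.mul_one, hUU]
  have hprod : ((1 + c • S)⁻¹ * S).trace = ∑ i, μ i / (1 + c * μ i) := by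
    rw [hinv]
    conv_lhs => rw [hspec]
    calc (U * diagonal (fun i => (1 + c * μ i)⁻¹) * star U * (U * diagonal μ * star U)).trace
        = (U * (diagonal (fun i => (1 + c * μ i)⁻¹) * (star U * U) * diagonal μ) * star U).trace := by
          simp only [Matrix.mul_assoc]
      _ = (U * (diagonal (fun i => (1 + c * μ i)⁻¹) * diagonal μ) * star U).trace := by
          rw [hU'U, Matrix.mul_one]
      _ = ∑ i, μ i / (1 + c * μ i) := by
          rw [htraceConj, diagonal_mul_diagonal, trace_diagonal]
          exact Finset.sum_congr rfl fun i _ => by rw [div_eq_inv_mul]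
  rw [hprod, htrS]
  exact scalar_bound hk μ hμ0 hcard c hc
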